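/- Let (qₜ) be a sequence of reals defined by qₜ₊₁ = (1 − αₜ) qₜ + αₜ pₜ, where αₜ ∈ [0,1] and pₜ satisfies |pₜ − q*| ≤ γ |qₜ − q*| + λₜ with 0 ≤ γ < 1 and λₜ → 0, λₜ ≥ 0. If Σₜ αₜ = ∞ and αₜ → 0 (in particular each αₜ < 1 eventually), then qₜ → q*. -/

import Mathlib

set_option maxHeartbeats 1000000


open Filter

theorem stmt_8 (α lam p q : ℕ → ℝ) (qstar γ : ℝ)
    (hγ0 : 0 ≤ γ) (hγ1 : γ < 1)
    (hα0 : ∀ t, 0 ≤ α t) (hα1 : ∀ t, α t ≤ 1)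
    (hαdiv : Tendsto (fun n => ∑ t ∈ Finset.range n, α t) atTop atTop)
    (hαto0 : Tendsto α atTop (nhds 0))
    (hlam0 : ∀ t, 0 ≤ lam t) (hlamto0 : Tendsto lam atTop (nhds 0))
    (hupd : ∀ t, q (t + 1) = (1 - α t) * q t + α t * p t)
    (hpseudo : ∀ t, |p t - qstar| ≤ γ * |q t - qstar| + lam t) :
    Tendsto q atTop (nhds qstar) := by
  have hγ' : (0:ℝ) < 1 - γ := by linarith
  set e : ℕ → ℝ := fun t => |q t - qstar| with he_def
  have he0 : ∀ t, 0 ≤ e t := fun t => abs_nonneg _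
  have hc0 : ∀ t, 0 ≤ 1 - (1-γ)*α t := by
    intro t; nlinarith [hα0 t, hα1 t]
  have hrec : ∀ t, e (t+1) ≤ (1 - (1-γ)*α t) * e t + α t * lam t := by
    intro t
    have h1 : q (t+1) - qstar = (1 - α t) * (q t - qstar) + α t * (p t - qstar) := by
      rw [hupd t]; ring
    calc e (t+1) = |(1 - α t) * (q t - qstar) + α t * (p t - qstar)| := by
          simp only [he_def, h1]
      _ ≤ |(1 - α t) * (q t - qstar)| + |α t * (p t - qstar)| := abs_add_le _ _
      _ = (1 - α t) * |q t - qstar| + α t * |p t - qstar| := by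
          rw [abs_mul, abs_mul, abs_of_nonneg (by linarith [hα1 t]), abs_of_nonneg (hα0 t)]
      _ ≤ (1 - α t) * |q t - qstar| + α t * (γ * |q t - qstar| + lam t) := by
          have := mul_le_mul_of_nonneg_left (hpseudo t) (hα0 t)
          linarith
      _ = (1 - (1-γ)*α t) * e t + α t * lam t := by simp only [he_def]; ring
  have key : Tendsto e atTop (nhds 0) := by
    rw [Metric.tendsto_atTop]
    intro ε hε
    have hεpos : (0:ℝ) < (1-γ)*ε/2 := by positivity
    have hlam' : ∀ᶠ t in atTop, lam t < (1-γ)*ε/2 :=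
      hlamto0.eventually (gt_mem_nhds hεpos)
    obtain ⟨T, hT⟩ := eventually_atTop.1 hlam'
    set f : ℕ → ℝ := fun n => max (e (T+n) - ε/2) 0 with hf_def
    have hf0 : ∀ n, 0 ≤ f n := fun n => le_max_right _ _
    have hstep : ∀ n, f (n+1) ≤ (1 - (1-γ)*α (T+n)) * f n := by
      intro n
      set t := T + n with ht
      have hlamt : lam t ≤ (1-γ)*ε/2 := le_of_lt (hT t (by omega))
      have h1 : α t * lam t ≤ α t * ((1-γ)*ε/2) :=
        mul_le_mul_of_nonneg_left hlamt (hα0 t)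
      have h2 : e (t+1) - ε/2 ≤ (1 - (1-γ)*α t) * (e t - ε/2) := by
        have := hrec t; nlinarith
      have h3 : e t - ε/2 ≤ f n := le_max_left _ _
      have h4 : (1 - (1-γ)*α t) * (e t - ε/2) ≤ (1 - (1-γ)*α t) * f n :=
        mul_le_mul_of_nonneg_left h3 (hc0 t)
      have h5 : 0 ≤ (1 - (1-γ)*α t) * f n := mul_nonneg (hc0 t) (hf0 n)
      have : T + (n+1) = t + 1 := by omega
      simp only [hf_def, this]
      exact max_le (le_trans h2 h4) h5
    have hprodbound : ∀ n, f n ≤ f 0 * ∏ s ∈ Finset.range n, (1 - (1-γ)*α (T+s)) := by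
      intro n
      induction n with
      | zero => simp
      | succ n ih =>
        rw [Finset.prod_range_succ, ← mul_assoc]
        calc f (n+1) ≤ (1 - (1-γ)*α (T+n)) * f n := hstep n
          _ ≤ (1 - (1-γ)*α (T+n)) * (f 0 * ∏ s ∈ Finset.range n, (1 - (1-γ)*α (T+s))) :=
              mul_le_mul_of_nonneg_left ih (hc0 _)
          _ = f 0 * (∏ s ∈ Finset.range n, (1 - (1-γ)*α (T+s))) * (1 - (1-γ)*α (T+n)) := by ring
    have hprod_le_exp : ∀ n, (∏ s ∈ Finset.range n, (1 - (1-γ)*α (T+s)))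
        ≤ Real.exp (-((1-γ) * ∑ s ∈ Finset.range n, α (T+s))) := by
      intro n
      have h1 : ∀ s ∈ Finset.range n, (1 - (1-γ)*α (T+s)) ≤ Real.exp (-((1-γ)*α (T+s))) := by
        intro s _
        have := Real.add_one_le_exp (-((1-γ)*α (T+s)))
        linarith
      calc (∏ s ∈ Finset.range n, (1 - (1-γ)*α (T+s)))
          ≤ ∏ s ∈ Finset.range n, Real.exp (-((1-γ)*α (T+s))) :=
            Finset.prod_le_prod (fun s _ => hc0 _) h1
        _ = Real.exp (∑ s ∈ Finset.range n, -((1-γ)*α (T+s))) := (Real.exp_sum _ _).symm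
        _ = Real.exp (-((1-γ) * ∑ s ∈ Finset.range n, α (T+s))) := by
            congr 1
            rw [Finset.mul_sum]
            exact Finset.sum_neg_distrib _
    have hsum_tendsto : Tendsto (fun n => ∑ s ∈ Finset.range n, α (T+s)) atTop atTop := by
      have h1 : Tendsto (fun n => ∑ t ∈ Finset.range (T+n), α t) atTop atTop := by
        have h0 := hαdiv.comp (tendsto_add_atTop_nat T)
        simpa [Function.comp_def, Nat.add_comm] using h0
      have h2 : ∀ n, ∑ s ∈ Finset.range n, α (T+s)
          = (∑ t ∈ Finset.range (T+n), α t) - ∑ t ∈ Finset.range T, α t := by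
        intro n
        rw [Finset.sum_range_add]
        ring
      simp only [h2]
      exact tendsto_atTop_add_const_right _ _ h1
    have hexp_tendsto : Tendsto (fun n => f 0 * Real.exp (-((1-γ) * ∑ s ∈ Finset.range n, α (T+s)))) atTop (nhds 0) := by
      have h1 : Tendsto (fun n => -((1-γ) * ∑ s ∈ Finset.range n, α (T+s))) atTop atBot := by
        apply tendsto_neg_atTop_atBot.comp
        exact hsum_tendsto.const_mul_atTop hγ'
      have h2 := Real.tendsto_exp_atBot.comp h1
      have := h2.const_mul (f 0)
      simpa using this
    have hev : ∀ᶠ n in atTop, f 0 * Real.exp (-((1-γ) * ∑ s ∈ Finset.range n, α (T+s))) < ε/2 :=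
      hexp_tendsto.eventually (gt_mem_nhds (by linarith))
    obtain ⟨N, hN⟩ := eventually_atTop.1 hev
    refine ⟨T + N, fun t ht => ?_⟩
    have hstruct : t = T + (t - T) := by omega
    have htN : N ≤ t - T := by omega
    have hf2 : f (t - T) < ε/2 := by
      calc f (t - T) ≤ f 0 * ∏ s ∈ Finset.range (t-T), (1 - (1-γ)*α (T+s)) := hprodbound _
        _ ≤ f 0 * Real.exp (-((1-γ) * ∑ s ∈ Finset.range (t-T), α (T+s))) :=
            mul_le_mul_of_nonneg_left (hprod_le_exp _) (hf0 0)
        _ < ε/2 := hN _ htN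
    have het : e t - ε/2 ≤ f (t - T) := by
      rw [hf_def]
      simp only
      rw [← hstruct]
      exact le_max_left _ _
    have : e t < ε := by linarith
    rw [Real.dist_eq, sub_zero, abs_of_nonneg (he0 t)]
    exact this
  have : Tendsto (fun t => ‖q t - qstar‖) atTop (nhds 0) := by
    simpa [Real.norm_eq_abs] using key
  exact tendsto_iff_norm_sub_tendsto_zero.2 this
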